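/- Suppose np ≥ 10^15. Then with probability 1 − o(n^{−2}) (uniformly over all p with 10^15/n ≤ p ≤ 1) the random graph G = G(n,p) has the following property: for every set U ⊆ V(G) with |U| ≥ n/10^6 and every subgraph H of G with U ⊆ V(H) and at most p·n²/10^16 edges such that U has many boosters in H, at least one of these boosters is an edge of G. -/
import Mathlib

open MeasureTheory

/-- The Bernoulli measure on `Bool` with parameter `p`. -/
noncomputable def bern (p : ℝ) : Measure Bool :=
  (ENNReal.ofReal p) • Measure.dirac true + (ENNReal.ofReal (1 - p)) • Measure.dirac false

instance bern.instIsFiniteMeasure (p : ℝ) : IsFiniteMeasure (bern p) := by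
  constructor
  simp only [bern, Measure.coe_add, Pi.add_apply, Measure.coe_smul, Pi.smul_apply,
    smul_eq_mul, measure_univ, mul_one]
  exact ENNReal.add_lt_top.2 ⟨ENNReal.ofReal_lt_top, ENNReal.ofReal_lt_top⟩

/-- The distribution of the binomial random graph `G(n,p)`. -/
noncomputable def gnp (n : ℕ) (p : ℝ) :
    Measure ({e : Sym2 (Fin n) // ¬ e.IsDiag} → Bool) :=
  Measure.pi fun _ => bern p

/-- The graph on `Fin n` determined by a sample point. -/
def graphOf {n : ℕ} (ω : {e : Sym2 (Fin n) // ¬ e.IsDiag} → Bool) : SimpleGraph (Fin n) :=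
  SimpleGraph.fromEdgeSet {e | ∃ h : ¬ e.IsDiag, ω ⟨e, h⟩ = true}

/-- A graph is Hamiltonian if it contains a cycle through all of its vertices. -/
def HamiltonianGraph {V : Type*} (G : SimpleGraph V) : Prop :=
  ∃ (v : V) (c : G.Walk v v), c.IsCycle ∧ ∀ u, u ∈ c.support

/-- The boosters of a graph `K`: non-edges `e` such that `K + e` is Hamiltonian. -/
def boosters {V : Type*} (K : SimpleGraph V) : Set (Sym2 V) :=
  {e | ¬ e.IsDiag ∧ e ∉ K.edgeSet ∧ HamiltonianGraph (K ⊔ SimpleGraph.fromEdgeSet {e})}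

/-- A vertex set `U` has *many boosters* in `H` if the induced subgraph `H[U]` has at
least `|U|²/32` boosters. -/
def ManyBoosters {V : Type*} (H : SimpleGraph V) (U : Set V) : Prop :=
  (U.ncard : ℝ) ^ 2 / 32 ≤ (boosters (H.induce U)).ncard

/-! ### Auxiliary definitions -/

abbrev EI (n : ℕ) : Type := {e : Sym2 (Fin n) // ¬ e.IsDiag}

/-- The graph determined by a finite set of non-diagonal pairs. -/
def KG {n : ℕ} (S : Finset (EI n)) : SimpleGraph (Fin n) :=
  SimpleGraph.fromEdgeSet (Subtype.val '' (↑S : Set (EI n)))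

open Classical in
/-- The coordinates which are images of boosters of `(KG S)[U]`. -/
noncomputable def TB {n : ℕ} (U : Set (Fin n)) (S : Finset (EI n)) : Finset (EI n) :=
  Finset.univ.filter
    (fun i => ∃ e ∈ boosters ((KG S).induce U), Sym2.map (Subtype.val : ↥U → Fin n) e = i.val)

lemma mem_TB {n : ℕ} {U : Set (Fin n)} {S : Finset (EI n)} {i : EI n} :
    i ∈ TB U S ↔
      ∃ e ∈ boosters ((KG S).induce U), Sym2.map (Subtype.val : ↥U → Fin n) e = i.val := by
  simp [TB]

/-- Cylinder event: coordinates in `S` are `true`, coordinates in `T` are `false`. -/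
def cylEvent {n : ℕ} (S T : Finset (EI n)) : Set (EI n → Bool) :=
  {ω | (∀ i ∈ S, ω i = true) ∧ (∀ i ∈ T, ω i = false)}

noncomputable def mB (n : ℕ) (p : ℝ) : ℕ := ⌊p * (n : ℝ) ^ 2 / 10 ^ 16⌋₊

noncomputable def bB (n : ℕ) : ℕ := ⌈((n : ℝ) / 10 ^ 6) ^ 2 / 32⌉₊

/-- The bad event. -/
def BadSet (n : ℕ) (p : ℝ) : Set (EI n → Bool) :=
  {ω | ¬ ∀ U : Set (Fin n), (n : ℝ) / 10 ^ 6 ≤ U.ncard →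
          ∀ H : (graphOf ω).Subgraph, U ⊆ H.verts →
            (H.edgeSet.ncard : ℝ) ≤ p * n ^ 2 / 10 ^ 16 →
            ManyBoosters H.spanningCoe U →
            ∃ e ∈ boosters ((H.spanningCoe).induce U),
              Sym2.map (Subtype.val : ↥U → Fin n) e ∈ (graphOf ω).edgeSet}

/-- The covering events. -/
noncomputable def EV (n : ℕ) (p : ℝ) (x : Set (Fin n) × Finset (EI n)) : Set (EI n → Bool) :=
  if x.2.card ≤ mB n p ∧ bB n ≤ (TB x.1 x.2).card then cylEvent x.2 (TB x.1 x.2) else ∅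

/-- The real bound. -/
noncomputable def RB (n : ℕ) (p : ℝ) : ℝ :=
  2 ^ n * (∑ k ∈ Finset.range (mB n p + 1), (Nat.choose (Nat.choose n 2) k : ℝ) * p ^ k)
    * (1 - p) ^ (bB n)

/-! ### Small lemmas -/

lemma bern_true {p : ℝ} : bern p {true} = ENNReal.ofReal p := by
  simp [bern, Measure.dirac_apply' _ (by trivial : MeasurableSet ({true} : Set Bool))]

lemma bern_false {p : ℝ} : bern p {false} = ENNReal.ofReal (1 - p) := by
  simp [bern, Measure.dirac_apply' _ (by trivial : MeasurableSet ({false} : Set Bool))]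

lemma bern_univ {p : ℝ} (hp0 : 0 ≤ p) (hp1 : p ≤ 1) : bern p Set.univ = 1 := by
  simp only [bern, Measure.coe_add, Pi.add_apply, Measure.coe_smul, Pi.smul_apply,
    smul_eq_mul, measure_univ, mul_one]
  rw [← ENNReal.ofReal_add hp0 (by linarith)]
  norm_num

lemma gnp_cylEvent {n : ℕ} {p : ℝ} (hp0 : 0 ≤ p) (hp1 : p ≤ 1) (S T : Finset (EI n))
    (hd : Disjoint S T) :
    gnp n p (cylEvent S T)
      = ENNReal.ofReal p ^ S.card * ENNReal.ofReal (1 - p) ^ T.card := by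
  classical
  set C : EI n → Set Bool :=
    fun i => if i ∈ S then {true} else if i ∈ T then ({false} : Set Bool) else Set.univ with hC
  have hset : cylEvent S T = Set.pi Set.univ C := by
    ext ω
    simp only [cylEvent, Set.mem_setOf_eq, Set.mem_pi, Set.mem_univ, forall_true_left, hC]
    constructor
    · rintro ⟨h1, h2⟩ i
      by_cases hiS : i ∈ S
      · simp [hiS, h1 i hiS]
      · by_cases hiT : i ∈ T
        · simp [hiS, hiT, h2 i hiT]
        · simp [hiS, hiT]
    · intro h
      constructor
      · intro i hi
        have := h i
        simpa [hi] using this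
      · intro i hi
        have hiS : i ∉ S := fun hS => (Finset.disjoint_left.1 hd hS) hi
        have := h i
        simpa [hiS, hi] using this
  rw [hset, gnp, Measure.pi_pi]
  have hsub : S ∪ T ⊆ Finset.univ := Finset.subset_univ _
  rw [← Finset.prod_sdiff hsub, Finset.prod_union hd]
  have h1 : ∏ i ∈ Finset.univ \ (S ∪ T), bern p (C i) = 1 := by
    apply Finset.prod_eq_one
    intro i hi
    rw [Finset.mem_sdiff, Finset.mem_union] at hi
    push_neg at hi
    simp only [hC, if_neg hi.2.1, if_neg hi.2.2]
    exact bern_univ hp0 hp1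
  have h2 : ∏ i ∈ S, bern p (C i) = ENNReal.ofReal p ^ S.card := by
    rw [Finset.prod_congr rfl (fun i hi => ?_), Finset.prod_const]
    simp only [hC, if_pos hi]
    exact bern_true
  have h3 : ∏ i ∈ T, bern p (C i) = ENNReal.ofReal (1 - p) ^ T.card := by
    rw [Finset.prod_congr rfl (fun i hi => ?_), Finset.prod_const]
    have hiS : i ∉ S := fun hS => (Finset.disjoint_left.1 hd hS) hi
    simp only [hC, if_neg hiS, if_pos hi]
    exact bern_false
  rw [h1, h2, h3, one_mul]

lemma mem_graphOf {n : ℕ} {ω : EI n → Bool} {e : Sym2 (Fin n)} :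
    e ∈ (graphOf ω).edgeSet ↔ ∃ h : ¬ e.IsDiag, ω ⟨e, h⟩ = true := by
  rw [graphOf, SimpleGraph.edgeSet_fromEdgeSet]
  constructor
  · rintro ⟨⟨h, hw⟩, -⟩
    exact ⟨h, hw⟩
  · rintro ⟨h, hw⟩
    exact ⟨⟨h, hw⟩, h⟩

lemma spanningCoe_edgeSet {V : Type*} {G : SimpleGraph V} (H : G.Subgraph) :
    H.spanningCoe.edgeSet = H.edgeSet := by
  ext e
  induction e with
  | _ a b => simp [SimpleGraph.mem_edgeSet, SimpleGraph.Subgraph.mem_edgeSet]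

lemma map_val_mem_iff {n : ℕ} (K : SimpleGraph (Fin n)) (U : Set (Fin n)) (e : Sym2 ↥U) :
    Sym2.map (Subtype.val : ↥U → Fin n) e ∈ K.edgeSet ↔ e ∈ (K.induce U).edgeSet := by
  induction e with
  | _ a b => simp [SimpleGraph.mem_edgeSet, SimpleGraph.induce, SimpleGraph.comap_adj]

lemma disj_TB {n : ℕ} (U : Set (Fin n)) (S : Finset (EI n)) : Disjoint S (TB U S) := by
  rw [Finset.disjoint_right]
  intro i hiT hiS
  rw [mem_TB] at hiT
  obtain ⟨e, he, hei⟩ := hiT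
  have hmem : e ∈ ((KG S).induce U).edgeSet := by
    rw [← map_val_mem_iff, hei, KG, SimpleGraph.edgeSet_fromEdgeSet]
    exact ⟨⟨i, hiS, rfl⟩, i.2⟩
  exact he.2.1 hmem

/-! ### Covering -/

lemma cover (n : ℕ) (p : ℝ) : BadSet n p ⊆ ⋃ x : Set (Fin n) × Finset (EI n), EV n p x := by
  classical
  intro ω hω
  simp only [BadSet, Set.mem_setOf_eq] at hω
  push_neg at hω
  obtain ⟨U, hU, H, hUv, hHe, hMany, hfail⟩ := hω
  set S : Finset (EI n) := Finset.univ.filter (fun i => i.1 ∈ H.edgeSet) with hS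
  have himg : Subtype.val '' (↑S : Set (EI n)) = H.edgeSet := by
    ext e
    constructor
    · rintro ⟨i, hi, rfl⟩
      simpa [hS] using hi
    · intro he
      have hnd : ¬ e.IsDiag :=
        SimpleGraph.not_isDiag_of_mem_edgeSet _ (H.edgeSet_subset he)
      exact ⟨⟨e, hnd⟩, by simpa [hS] using he, rfl⟩
  have hK : KG S = H.spanningCoe := by
    rw [KG, himg, ← spanningCoe_edgeSet H, SimpleGraph.fromEdgeSet_edgeSet]
  have hcard : (S.card : ℝ) = (H.edgeSet.ncard : ℝ) := by
    rw [← himg, Set.ncard_image_of_injective _ Subtype.val_injective, Set.ncard_coe_finset]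
  have hc1 : S.card ≤ mB n p := Nat.le_floor (by rw [hcard]; exact hHe)
  have hc2 : bB n ≤ (TB U S).card := by
    have hB : ((n : ℝ) / 10 ^ 6) ^ 2 / 32 ≤ ((boosters (H.spanningCoe.induce U)).ncard : ℝ) := by
      refine le_trans ?_ hMany
      have h0 : (0 : ℝ) ≤ (n : ℝ) / 10 ^ 6 := by positivity
      have := pow_le_pow_left₀ h0 hU 2
      linarith
    have hB' : bB n ≤ (boosters (H.spanningCoe.induce U)).ncard := by
      rw [bB]
      exact Nat.ceil_le.2 (by exact_mod_cast hB)
    have hinj : Function.Injective (Sym2.map (Subtype.val : ↥U → Fin n)) :=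
      Sym2.map.injective Subtype.val_injective
    have himg2 : (Sym2.map (Subtype.val : ↥U → Fin n) '' boosters (H.spanningCoe.induce U))
        ⊆ Subtype.val '' (↑(TB U S) : Set (EI n)) := by
      rintro _ ⟨e, he, rfl⟩
      have hnd : ¬ (Sym2.map (Subtype.val : ↥U → Fin n) e).IsDiag := by
        rw [Sym2.isDiag_map Subtype.val_injective]
        exact he.1
      refine ⟨⟨_, hnd⟩, ?_, rfl⟩
      rw [Finset.mem_coe, mem_TB]
      exact ⟨e, by rwa [hK], rfl⟩
    calc bB n ≤ (boosters (H.spanningCoe.induce U)).ncard := hB'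
      _ = (Sym2.map (Subtype.val : ↥U → Fin n) '' boosters (H.spanningCoe.induce U)).ncard :=
          (Set.ncard_image_of_injective _ hinj).symm
      _ ≤ (Subtype.val '' (↑(TB U S) : Set (EI n))).ncard :=
          Set.ncard_le_ncard himg2 (Set.toFinite _)
      _ = (TB U S).card := by
          rw [Set.ncard_image_of_injective _ Subtype.val_injective, Set.ncard_coe_finset]
  refine Set.mem_iUnion.2 ⟨(U, S), ?_⟩
  rw [EV, if_pos ⟨hc1, hc2⟩]
  constructor
  · intro i hi
    have hie : i.1 ∈ (graphOf ω).edgeSet :=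
      H.edgeSet_subset (by simpa [hS] using hi)
    obtain ⟨h, hw⟩ := mem_graphOf.1 hie
    convert hw using 2
  · intro i hi
    rw [mem_TB] at hi
    obtain ⟨e, he, hei⟩ := hi
    rw [hK] at he
    have hnot := hfail e he
    rw [hei] at hnot
    by_contra hcon
    apply hnot
    refine mem_graphOf.2 ⟨i.2, ?_⟩
    have : ω i = true := by
      cases hb : ω i
      · exact absurd hb hcon
      · rfl
    convert this using 2

/-! ### Counting -/

lemma fac_le_pow_mul' (k d : ℕ) : Nat.factorial (k + d) ≤ Nat.factorial k * (k + d) ^ d := by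
  induction d with
  | zero => simp
  | succ d ih =>
      have h1 : Nat.factorial (k + (d + 1)) = (k + d + 1) * Nat.factorial (k + d) := by
        rw [show k + (d + 1) = (k + d) + 1 from rfl, Nat.factorial_succ]
      rw [h1]
      calc (k + d + 1) * Nat.factorial (k + d)
          ≤ (k + d + 1) * (Nat.factorial k * (k + d) ^ d) := Nat.mul_le_mul_left _ ih
        _ ≤ (k + d + 1) * (Nat.factorial k * (k + d + 1) ^ d) := by
            exact Nat.mul_le_mul_left _ (Nat.mul_le_mul_left _
              (Nat.pow_le_pow_left (Nat.le_succ _) d))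
        _ = Nat.factorial k * (k + (d + 1)) ^ (d + 1) := by ring_nf
  
lemma fac_le_pow_mul (k m : ℕ) (h : k ≤ m) : Nat.factorial m ≤ Nat.factorial k * m ^ (m - k) := by
  obtain ⟨d, rfl⟩ := Nat.exists_eq_add_of_le h
  simpa using fac_le_pow_mul' k d

lemma real_sum_le (n : ℕ) (p : ℝ) (hp0 : 0 ≤ p) (hp1 : p ≤ 1) :
    ∑ x : Set (Fin n) × Finset (EI n),
      (if x.2.card ≤ mB n p then p ^ x.2.card * (1 - p) ^ bB n else 0) ≤ RB n p := by
  classical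
  have hq0 : (0 : ℝ) ≤ 1 - p := by linarith
  set m := mB n p
  set b := bB n
  set A : ℝ := ∑ k ∈ Finset.range (m + 1), (Nat.choose (Nat.choose n 2) k : ℝ) * p ^ k with hA
  have hNcard : Fintype.card (EI n) = Nat.choose n 2 := by
    rw [Sym2.card_subtype_not_diag, Fintype.card_fin]
  have hinner : ∑ S : Finset (EI n), (if S.card ≤ m then p ^ S.card * (1 - p) ^ b else 0)
      ≤ A * (1 - p) ^ b := by
    have e0 : ∀ S : Finset (EI n),
        (if S.card ≤ m then p ^ S.card * (1 - p) ^ b else 0)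
          = (if S.card ≤ m then p ^ S.card else 0) * (1 - p) ^ b := by
      intro S
      by_cases h : S.card ≤ m <;> simp [h]
    simp_rw [e0]
    rw [← Finset.sum_mul]
    refine mul_le_mul_of_nonneg_right ?_ (by positivity)
    rw [← Finset.sum_filter]
    have hmaps : ∀ S ∈ Finset.univ.filter (fun S : Finset (EI n) => S.card ≤ m),
        S.card ∈ Finset.range (m + 1) := by
      intro S hS
      rw [Finset.mem_filter] at hS
      rw [Finset.mem_range]
      omega
    rw [← Finset.sum_fiberwise_of_maps_to hmaps (fun S => p ^ S.card)]
    refine Finset.sum_le_sum fun k hk => ?_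
    have e1 : ∑ S ∈ (Finset.univ.filter (fun S : Finset (EI n) => S.card ≤ m)).filter
        (fun S => S.card = k), p ^ S.card
        = ∑ S ∈ (Finset.univ.filter (fun S : Finset (EI n) => S.card ≤ m)).filter
        (fun S => S.card = k), p ^ k := by
      refine Finset.sum_congr rfl fun S hS => ?_
      rw [Finset.mem_filter] at hS
      rw [hS.2]
    rw [e1, Finset.sum_const, nsmul_eq_mul]
    refine mul_le_mul_of_nonneg_right ?_ (by positivity)
    have hsub : (Finset.univ.filter (fun S : Finset (EI n) => S.card ≤ m)).filter
        (fun S => S.card = k) ⊆ Finset.powersetCard k Finset.univ := by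
      intro S hS
      rw [Finset.mem_filter, Finset.mem_filter] at hS
      rw [Finset.mem_powersetCard]
      exact ⟨Finset.subset_univ _, hS.2⟩
    have := Finset.card_le_card hsub
    rw [Finset.card_powersetCard, Finset.card_univ, hNcard] at this
    exact_mod_cast this
  calc ∑ x : Set (Fin n) × Finset (EI n),
      (if x.2.card ≤ m then p ^ x.2.card * (1 - p) ^ b else 0)
      = ∑ U : Set (Fin n), ∑ S : Finset (EI n),
        (if S.card ≤ m then p ^ S.card * (1 - p) ^ b else 0) := Fintype.sum_prod_type _
    _ ≤ ∑ _U : Set (Fin n), A * (1 - p) ^ b := Finset.sum_le_sum fun U _ => hinner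
    _ = (Fintype.card (Set (Fin n)) : ℝ) * (A * (1 - p) ^ b) := by
        rw [Finset.sum_const, Finset.card_univ, nsmul_eq_mul]
    _ = RB n p := by
        rw [Fintype.card_set, Fintype.card_fin, RB]
        push_cast
        ring

lemma gnp_bad_le (n : ℕ) (p : ℝ) (hp0 : 0 ≤ p) (hp1 : p ≤ 1) :
    gnp n p (BadSet n p) ≤ ENNReal.ofReal (RB n p) := by
  classical
  have hq0 : (0 : ℝ) ≤ 1 - p := by linarith
  have hterm : ∀ x : Set (Fin n) × Finset (EI n),
      gnp n p (EV n p x)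
        ≤ ENNReal.ofReal (if x.2.card ≤ mB n p then p ^ x.2.card * (1 - p) ^ bB n else 0) := by
    intro x
    by_cases hg : x.2.card ≤ mB n p ∧ bB n ≤ (TB x.1 x.2).card
    · rw [EV, if_pos hg, if_pos hg.1, gnp_cylEvent hp0 hp1 _ _ (disj_TB x.1 x.2)]
      have e1 : ENNReal.ofReal p ^ x.2.card * ENNReal.ofReal (1 - p) ^ (TB x.1 x.2).card
          = ENNReal.ofReal (p ^ x.2.card * (1 - p) ^ (TB x.1 x.2).card) := by
        rw [← ENNReal.ofReal_pow hp0, ← ENNReal.ofReal_pow hq0,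
          ← ENNReal.ofReal_mul (by positivity)]
      rw [e1]
      refine ENNReal.ofReal_le_ofReal ?_
      refine mul_le_mul_of_nonneg_left ?_ (by positivity)
      exact pow_le_pow_of_le_one hq0 (by linarith) hg.2
    · rw [EV, if_neg hg]
      simp
  calc gnp n p (BadSet n p)
      ≤ gnp n p (⋃ x : Set (Fin n) × Finset (EI n), EV n p x) := measure_mono (cover n p)
    _ ≤ ∑' x : Set (Fin n) × Finset (EI n), gnp n p (EV n p x) := measure_iUnion_le _
    _ = ∑ x : Set (Fin n) × Finset (EI n), gnp n p (EV n p x) := tsum_fintype _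
    _ ≤ ∑ x : Set (Fin n) × Finset (EI n),
        ENNReal.ofReal (if x.2.card ≤ mB n p then p ^ x.2.card * (1 - p) ^ bB n else 0) :=
        Finset.sum_le_sum fun x _ => hterm x
    _ = ENNReal.ofReal (∑ x : Set (Fin n) × Finset (EI n),
        (if x.2.card ≤ mB n p then p ^ x.2.card * (1 - p) ^ bB n else 0)) := by
        rw [ENNReal.ofReal_sum_of_nonneg]
        intro x _
        by_cases h : x.2.card ≤ mB n p <;> simp [h] <;> positivity
    _ ≤ ENNReal.ofReal (RB n p) := ENNReal.ofReal_le_ofReal (real_sum_le n p hp0 hp1)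

/-! ### Analysis -/

set_option maxHeartbeats 1000000 in
lemma RB_le (ε : ℝ) (hε : 0 < ε) : ∃ N₀ : ℕ, ∀ n : ℕ, N₀ ≤ n → ∀ p : ℝ,
    (10 : ℝ) ^ 15 ≤ n * p → p ≤ 1 → RB n p ≤ ε / n ^ 2 := by
  -- choose N₀ from a limit argument
  have h1 : Filter.Tendsto (fun x : ℝ => x ^ 4 * Real.exp (-x)) Filter.atTop (nhds 0) :=
    Real.tendsto_pow_mul_exp_neg_atTop_nhds_zero 4
  have h2 : Filter.Tendsto (fun k : ℕ => (26 : ℝ) * k) Filter.atTop Filter.atTop :=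
    Filter.Tendsto.const_mul_atTop (by norm_num) tendsto_natCast_atTop_atTop
  have h3 := h1.comp h2
  have h4 : Filter.Tendsto (fun k : ℕ => 2 * (k : ℝ) ^ 4 * Real.exp (-(26 * k)))
      Filter.atTop (nhds 0) := by
    have h5 := h3.const_mul (2 / (26 : ℝ) ^ 4)
    rw [mul_zero] at h5
    refine Filter.Tendsto.congr ?_ h5
    intro k
    simp only [Function.comp]
    ring
  have h6 := h4.eventually (gt_mem_nhds hε)
  obtain ⟨N₀, hN₀⟩ := Filter.eventually_atTop.1 h6
  refine ⟨N₀, fun n hn p hnp hp1 => ?_⟩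
  have key := hN₀ n hn
  -- basic facts
  have hnn : (0 : ℝ) ≤ n := Nat.cast_nonneg n
  have hn15 : (10 : ℝ) ^ 15 ≤ n := by
    have := mul_le_mul_of_nonneg_left hp1 hnn
    rw [mul_one] at this
    linarith
  have hp0 : 0 < p := by
    rcases lt_or_ge 0 p with h | h
    · exact h
    · have hle : (n : ℝ) * p ≤ 0 := mul_nonpos_of_nonneg_of_nonpos hnn h
      exact absurd (le_trans hnp hle) (by norm_num)
  have hq0 : (0 : ℝ) ≤ 1 - p := by linarith
  set r : ℝ := p * (n : ℝ) ^ 2 / 10 ^ 16 with hr_def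
  clear_value r
  have hr0 : 0 ≤ r := by rw [hr_def]; positivity
  have hrn : (n : ℝ) / 10 ≤ r := by
    rw [hr_def]
    linarith [mul_le_mul_of_nonneg_right hnp hnn]
  have hr1 : (1 : ℝ) ≤ r := by linarith
  set m := mB n p with hm_def
  clear_value m
  have hmB : m = ⌊r⌋₊ := by rw [hm_def, hr_def]; rfl
  have hmr : (m : ℝ) ≤ r := by rw [hmB]; exact Nat.floor_le hr0
  have hm1 : 1 ≤ m := by
    rw [hmB]
    exact Nat.le_floor (by exact_mod_cast hr1)
  have hm1' : (1 : ℝ) ≤ (m : ℝ) := by exact_mod_cast hm1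
  have hrm : r ≤ 2 * m := by
    have hlt := Nat.lt_floor_add_one r
    rw [← hmB] at hlt
    push_cast at hlt
    linarith
  set N := Nat.choose n 2 with hN_def
  clear_value N
  have hNcast : (N : ℝ) = n * ((n : ℝ) - 1) / 2 := by
    rw [hN_def]; exact Nat.cast_choose_two ℝ n
  set c : ℝ := N * p with hc_def
  clear_value c
  have hc0 : 0 ≤ c := by rw [hc_def]; positivity
  have hmc : (m : ℝ) ≤ c := by
    have hn2 : (2 : ℝ) ≤ n := by linarith
    have hpt : (0 : ℝ) ≤ p * (((n : ℝ) - 2) * n) :=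
      mul_nonneg hp0.le (mul_nonneg (by linarith) hnn)
    have hq : p * (n : ℝ) ^ 2 / 4 ≤ c := by
      rw [hc_def, hNcast]
      nlinarith [hpt]
    linarith [hmr, hq]
  have hcm : c ≤ 10 ^ 16 * m := by
    have hpn : (0 : ℝ) ≤ p * n := mul_nonneg hp0.le hnn
    have hq : c ≤ p * (n : ℝ) ^ 2 / 2 := by
      rw [hc_def, hNcast]
      nlinarith [hpn]
    linarith [hrm, hq]
  -- bound on the sum A
  set A : ℝ := ∑ k ∈ Finset.range (m + 1), (Nat.choose N k : ℝ) * p ^ k with hA_def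
  clear_value A
  have hterm : ∀ k, k ≤ m → (Nat.choose N k : ℝ) * p ^ k ≤ c ^ m / Nat.factorial m := by
    intro k hk
    have hkfac : (0 : ℝ) < Nat.factorial k := by exact_mod_cast Nat.factorial_pos k
    have hmfac : (0 : ℝ) < Nat.factorial m := by exact_mod_cast Nat.factorial_pos m
    have e1 : (Nat.choose N k : ℝ) * p ^ k ≤ c ^ k / Nat.factorial k := by
      rw [le_div_iff₀ hkfac]
      have hnat : Nat.choose N k * Nat.factorial k ≤ N ^ k := by
        calc Nat.choose N k * Nat.factorial k = Nat.factorial k * Nat.choose N k := by ring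
          _ = N.descFactorial k := (Nat.descFactorial_eq_factorial_mul_choose N k).symm
          _ ≤ N ^ k := Nat.descFactorial_le_pow N k
      have hnat' : (Nat.choose N k : ℝ) * Nat.factorial k ≤ (N : ℝ) ^ k := by exact_mod_cast hnat
      have hppow : (0 : ℝ) ≤ p ^ k := by positivity
      calc (Nat.choose N k : ℝ) * p ^ k * Nat.factorial k
          = ((Nat.choose N k : ℝ) * Nat.factorial k) * p ^ k := by ring
        _ ≤ (N : ℝ) ^ k * p ^ k := by nlinarith [pow_nonneg (Nat.cast_nonneg N : (0:ℝ) ≤ N) k]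
        _ = c ^ k := by rw [hc_def, mul_pow]
    have e2 : c ^ k / Nat.factorial k ≤ c ^ m / Nat.factorial m := by
      rw [div_le_div_iff₀ hkfac hmfac]
      have hfle : (Nat.factorial m : ℝ) ≤ Nat.factorial k * (m : ℝ) ^ (m - k) := by
        have := fac_le_pow_mul k m hk
        exact_mod_cast this
      have hpowle : (m : ℝ) ^ (m - k) ≤ c ^ (m - k) := pow_le_pow_left₀ (by linarith) hmc _
      calc c ^ k * (Nat.factorial m : ℝ)
          ≤ c ^ k * (Nat.factorial k * (m : ℝ) ^ (m - k)) := by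
            refine mul_le_mul_of_nonneg_left hfle (by positivity)
        _ ≤ c ^ k * (Nat.factorial k * c ^ (m - k)) := by
            refine mul_le_mul_of_nonneg_left ?_ (by positivity)
            exact mul_le_mul_of_nonneg_left hpowle (by positivity)
        _ = c ^ m * Nat.factorial k := by
            rw [show c ^ k * (Nat.factorial k * c ^ (m - k))
              = (c ^ k * c ^ (m - k)) * Nat.factorial k by ring, ← pow_add,
              Nat.add_sub_cancel' hk]
    exact le_trans e1 e2
  have hA : A ≤ (m + 1) * (c ^ m / Nat.factorial m) := by
    rw [hA_def]
    calc ∑ k ∈ Finset.range (m + 1), (Nat.choose N k : ℝ) * p ^ k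
        ≤ ∑ _k ∈ Finset.range (m + 1), c ^ m / Nat.factorial m := by
          refine Finset.sum_le_sum fun k hk => hterm k ?_
          rw [Finset.mem_range] at hk
          omega
      _ = (m + 1) * (c ^ m / Nat.factorial m) := by
          rw [Finset.sum_const, Finset.card_range, nsmul_eq_mul]
          push_cast
          ring
  have hcm' : c ^ m ≤ (10 ^ 16 : ℝ) ^ m * (m : ℝ) ^ m := by
    rw [← mul_pow]
    exact pow_le_pow_left₀ hc0 hcm m
  have hfacm : (m : ℝ) ^ m / Nat.factorial m ≤ Real.exp m :=
    Real.pow_div_factorial_le_exp (x := (m : ℝ)) (by positivity) m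
  have hA2 : A ≤ (m + 1) * ((10 ^ 16 : ℝ) ^ m * Real.exp m) := by
    have hmfac : (0 : ℝ) < Nat.factorial m := by exact_mod_cast Nat.factorial_pos m
    have hmm : (m : ℝ) ^ m ≤ Real.exp m * Nat.factorial m := by
      rw [← div_le_iff₀ hmfac]
      exact hfacm
    have hstep : c ^ m / Nat.factorial m ≤ (10 ^ 16 : ℝ) ^ m * Real.exp m := by
      rw [div_le_iff₀ hmfac]
      calc c ^ m ≤ (10 ^ 16 : ℝ) ^ m * (m : ℝ) ^ m := hcm'
        _ ≤ (10 ^ 16 : ℝ) ^ m * (Real.exp m * Nat.factorial m) := by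
            refine mul_le_mul_of_nonneg_left hmm (by positivity)
        _ = (10 ^ 16 : ℝ) ^ m * Real.exp m * Nat.factorial m := by ring
    calc A ≤ (m + 1) * (c ^ m / Nat.factorial m) := hA
      _ ≤ (m + 1) * ((10 ^ 16 : ℝ) ^ m * Real.exp m) := by
          refine mul_le_mul_of_nonneg_left hstep (by positivity)
  -- bound on the q-power
  have hb : (n : ℝ) ^ 2 / (32 * 10 ^ 12) ≤ (bB n : ℝ) := by
    rw [bB]
    linarith [Nat.le_ceil (((n : ℝ) / 10 ^ 6) ^ 2 / 32)]
  have hQ : (1 - p) ^ bB n ≤ Real.exp (-(312 * r)) := by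
    have hq_exp : (1 - p) ≤ Real.exp (-p) := by
      have := Real.add_one_le_exp (-p)
      linarith
    calc (1 - p) ^ bB n ≤ (Real.exp (-p)) ^ bB n := pow_le_pow_left₀ hq0 hq_exp _
      _ = Real.exp ((bB n : ℝ) * (-p)) := by rw [Real.exp_nat_mul]
      _ ≤ Real.exp (-(312 * r)) := by
          rw [Real.exp_le_exp]
          have h1 : p * ((n : ℝ) ^ 2 / (32 * 10 ^ 12)) ≤ p * (bB n : ℝ) :=
            mul_le_mul_of_nonneg_left hb hp0.le
          have h2 : 312 * r ≤ p * ((n : ℝ) ^ 2 / (32 * 10 ^ 12)) := by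
            rw [hr_def]
            have hpn2 : (0 : ℝ) ≤ p * (n : ℝ) ^ 2 := by positivity
            linarith
          linarith
  have h2n : (2 : ℝ) ^ n ≤ Real.exp n := by
    have h2e : (2 : ℝ) ≤ Real.exp 1 := by nlinarith [Real.exp_one_gt_d9]
    calc (2 : ℝ) ^ n ≤ (Real.exp 1) ^ n := pow_le_pow_left₀ (by norm_num) h2e n
      _ = Real.exp n := by rw [← Real.exp_nat_mul, mul_one]
  have h10 : (10 ^ 16 : ℝ) ^ m ≤ Real.exp (38 * m) := by
    have h1016 : (10 ^ 16 : ℝ) ≤ Real.exp 38 := by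
      have h27 : (2.7 : ℝ) ≤ Real.exp 1 := by nlinarith [Real.exp_one_gt_d9]
      calc (10 ^ 16 : ℝ) ≤ (2.7 : ℝ) ^ 38 := by norm_num
        _ ≤ (Real.exp 1) ^ 38 := pow_le_pow_left₀ (by norm_num) h27 38
        _ = Real.exp 38 := by
            rw [← Real.exp_nat_mul, mul_one]
            norm_num
    calc (10 ^ 16 : ℝ) ^ m ≤ (Real.exp 38) ^ m := pow_le_pow_left₀ (by norm_num) h1016 m
      _ = Real.exp (38 * m) := by rw [← Real.exp_nat_mul, mul_comm]
  -- assemble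
  have hAnn : 0 ≤ A := by
    rw [hA_def]
    refine Finset.sum_nonneg fun k _ => by positivity
  have hRB : RB n p = 2 ^ n * A * (1 - p) ^ bB n := by
    rw [RB, hA_def, hm_def, hN_def]
  have hfinal : RB n p ≤ 2 * (n : ℝ) ^ 2 * Real.exp (-(26 * n)) := by
    have step1 : RB n p ≤ Real.exp n * ((m + 1) * ((10 ^ 16 : ℝ) ^ m * Real.exp m))
        * Real.exp (-(312 * r)) := by
      rw [hRB]
      have e1 : (2 : ℝ) ^ n * A ≤ Real.exp n * ((m + 1) * ((10 ^ 16 : ℝ) ^ m * Real.exp m)) := by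
        refine mul_le_mul h2n hA2 hAnn (by positivity)
      refine mul_le_mul e1 hQ (by positivity) (by positivity)
    have step2 : Real.exp n * ((m + 1) * ((10 ^ 16 : ℝ) ^ m * Real.exp m))
        * Real.exp (-(312 * r))
        ≤ ((m : ℝ) + 1) * (Real.exp n * Real.exp (38 * m) * Real.exp m
            * Real.exp (-(312 * r))) := by
      have e2 : (10 ^ 16 : ℝ) ^ m * Real.exp m ≤ Real.exp (38 * m) * Real.exp m :=
        mul_le_mul_of_nonneg_right h10 (Real.exp_pos _).le
      have e3 : Real.exp (n : ℝ) * ((10 ^ 16 : ℝ) ^ m * Real.exp m) * Real.exp (-(312 * r))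
          ≤ Real.exp (n : ℝ) * (Real.exp (38 * m) * Real.exp m) * Real.exp (-(312 * r)) := by
        refine mul_le_mul_of_nonneg_right ?_ (Real.exp_pos _).le
        exact mul_le_mul_of_nonneg_left e2 (Real.exp_pos _).le
      calc Real.exp n * ((m + 1) * ((10 ^ 16 : ℝ) ^ m * Real.exp m)) * Real.exp (-(312 * r))
          = ((m : ℝ) + 1) * (Real.exp (n : ℝ) * ((10 ^ 16 : ℝ) ^ m * Real.exp m)
              * Real.exp (-(312 * r))) := by ring
        _ ≤ ((m : ℝ) + 1) * (Real.exp (n : ℝ) * (Real.exp (38 * m) * Real.exp m)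
              * Real.exp (-(312 * r))) := mul_le_mul_of_nonneg_left e3 (by positivity)
        _ = ((m : ℝ) + 1) * (Real.exp n * Real.exp (38 * m) * Real.exp m
              * Real.exp (-(312 * r))) := by ring
    have step3 : Real.exp n * Real.exp (38 * m) * Real.exp m * Real.exp (-(312 * r))
        = Real.exp ((n : ℝ) + 38 * m + m + -(312 * r)) := by
      rw [← Real.exp_add, ← Real.exp_add, ← Real.exp_add]
    have step4 : ((n : ℝ) + 38 * m + m + -(312 * r)) ≤ -(26 * n) := by
      linarith [hmr, hrn]
    have step5 : ((m : ℝ) + 1) ≤ 2 * (n : ℝ) ^ 2 := by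
      have hrn2 : r ≤ (n : ℝ) ^ 2 := by
        rw [hr_def]
        linarith [mul_le_mul_of_nonneg_right hp1 (sq_nonneg (n : ℝ))]
      have hn2ge : (1 : ℝ) ≤ (n : ℝ) ^ 2 := one_le_pow₀ (by linarith)
      linarith
    calc RB n p ≤ Real.exp n * ((m + 1) * ((10 ^ 16 : ℝ) ^ m * Real.exp m))
          * Real.exp (-(312 * r)) := step1
      _ ≤ ((m : ℝ) + 1) * (Real.exp n * Real.exp (38 * m) * Real.exp m
            * Real.exp (-(312 * r))) := step2
      _ = ((m : ℝ) + 1) * Real.exp ((n : ℝ) + 38 * m + m + -(312 * r)) := by rw [step3]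
      _ ≤ ((m : ℝ) + 1) * Real.exp (-(26 * n)) := by
          refine mul_le_mul_of_nonneg_left (Real.exp_le_exp.2 step4) (by positivity)
      _ ≤ 2 * (n : ℝ) ^ 2 * Real.exp (-(26 * n)) := by
          refine mul_le_mul_of_nonneg_right step5 (Real.exp_pos _).le
  have hn2 : (0 : ℝ) < (n : ℝ) ^ 2 := by
    have : (0 : ℝ) < n := by linarith
    positivity
  rw [le_div_iff₀ hn2]
  calc RB n p * (n : ℝ) ^ 2 ≤ 2 * (n : ℝ) ^ 2 * Real.exp (-(26 * n)) * (n : ℝ) ^ 2 := by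
        refine mul_le_mul_of_nonneg_right hfinal hn2.le
    _ = 2 * (n : ℝ) ^ 4 * Real.exp (-(26 * n)) := by ring
    _ ≤ ε := key.le

/-! ### Main theorem -/

theorem statement_11 :
    ∀ ε : ℝ, 0 < ε → ∃ N : ℕ, ∀ n : ℕ, N ≤ n → ∀ p : ℝ,
      (10 : ℝ) ^ 15 ≤ n * p → p ≤ 1 →
      gnp n p
        {ω | ¬ ∀ U : Set (Fin n), (n : ℝ) / 10 ^ 6 ≤ U.ncard →
          ∀ H : (graphOf ω).Subgraph, U ⊆ H.verts →
            (H.edgeSet.ncard : ℝ) ≤ p * n ^ 2 / 10 ^ 16 →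
            ManyBoosters H.spanningCoe U →
            ∃ e ∈ boosters ((H.spanningCoe).induce U),
              Sym2.map (Subtype.val : ↥U → Fin n) e ∈ (graphOf ω).edgeSet}
        ≤ ENNReal.ofReal (ε / n ^ 2) := by
  intro ε hε
  obtain ⟨N₀, hN₀⟩ := RB_le ε hε
  refine ⟨N₀, fun n hn p hnp hp1 => ?_⟩
  have hn0 : (0 : ℝ) ≤ n := Nat.cast_nonneg n
  have hp0 : 0 ≤ p := by nlinarith [pow_pos (show (0:ℝ) < 10 by norm_num) 15]
  have h1 : gnp n p (BadSet n p) ≤ ENNReal.ofReal (RB n p) := gnp_bad_le n p hp0 hp1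
  have h2 : RB n p ≤ ε / n ^ 2 := hN₀ n hn p hnp hp1
  exact le_trans h1 (ENNReal.ofReal_le_ofReal h2)
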